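/- Let E be a real inner product space, L : E →ₗ[ℝ] E a linear map, u ∈ E with ‖u‖ = 1, and σ, a real numbers with σ ≥ 1, a ≥ 0 and σ·a < 1. Assume L u = σ • u, and that for every v ∈ E with ⟪u, v⟫ = 0 one has ⟪u, L v⟫ = 0 and ‖L v‖ ≤ a·‖v‖. Then for all v₁, v₂ ∈ E: ‖L v₁‖²·‖L v₂‖² − ⟪L v₁, L v₂⟫² ≤ (σ·a)²·(‖v₁‖²·‖v₂‖² − ⟪v₁, v₂⟫²). (A linear map with a one-dimensional expanding direction σ and a complementary invariant contraction of norm a, with σ·a < 1, contracts two-dimensional Euclidean volumes: the Gram determinant of any pair of vectors is contracted by factor at most (σa)².) -/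

import Mathlib

open Function Filter Topology RealInnerProductSpace

lemma norm_smul_sq_real {E : Type*} [NormedAddCommGroup E] [NormedSpace ℝ E]
    (t : ℝ) (x : E) : ‖t • x‖ ^ 2 = t ^ 2 * ‖x‖ ^ 2 := by
  rw [norm_smul, mul_pow, Real.norm_eq_abs, sq_abs]

/-- Gram determinant contraction for a map bounded by `a` on the relevant vectors. -/
lemma gram_contract {E : Type*} [NormedAddCommGroup E] [InnerProductSpace ℝ E]
    (L : E →ₗ[ℝ] E) (a : ℝ) (ha : 0 ≤ a) (x y : E)
    (hx : ‖L x‖ ≤ a * ‖x‖) (hy : ∀ t : ℝ, ‖L (y - t • x)‖ ≤ a * ‖y - t • x‖) :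
    ‖L x‖ ^ 2 * ‖L y‖ ^ 2 - ⟪L x, L y⟫ ^ 2 ≤
      a ^ 4 * (‖x‖ ^ 2 * ‖y‖ ^ 2 - ⟪x, y⟫ ^ 2) := by
  by_cases hx0 : x = 0
  · subst hx0
    simp [map_zero]
  · have hxpos : (0:ℝ) < ‖x‖ := norm_pos_iff.mpr hx0
    set t : ℝ := ⟪x, y⟫ / ‖x‖ ^ 2 with ht
    set y' : E := y - t • x with hy'
    have hxn : (0:ℝ) < ‖x‖ ^ 2 := by positivity
    have hty : t * ‖x‖ ^ 2 = ⟪x, y⟫ := by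
      rw [ht]; exact div_mul_cancel₀ _ (ne_of_gt hxn)
    have hyy : y = y' + t • x := by simp [hy']
    have hny : ‖y‖ ^ 2 = ‖y'‖ ^ 2 + 2 * t * ⟪x, y'⟫ + t ^ 2 * ‖x‖ ^ 2 := by
      rw [hyy, @norm_add_sq_real, real_inner_smul_right, norm_smul_sq_real,
        real_inner_comm]
      ring
    have hiy : ⟪x, y⟫ = ⟪x, y'⟫ + t * ‖x‖ ^ 2 := by
      rw [hyy, inner_add_right, real_inner_smul_right, real_inner_self_eq_norm_sq]
    have hLy : L y = L y' + t • L x := by rw [hyy]; simp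
    have hnLy : ‖L y‖ ^ 2 = ‖L y'‖ ^ 2 + 2 * t * ⟪L x, L y'⟫ + t ^ 2 * ‖L x‖ ^ 2 := by
      rw [hLy, @norm_add_sq_real, real_inner_smul_right, norm_smul_sq_real,
        real_inner_comm]
      ring
    have hiLy : ⟪L x, L y⟫ = ⟪L x, L y'⟫ + t * ‖L x‖ ^ 2 := by
      rw [hLy, inner_add_right, real_inner_smul_right, real_inner_self_eq_norm_sq]
    have hxy'0 : ⟪x, y'⟫ = 0 := by nlinarith [hty, hiy]
    have hLy'le : ‖L y'‖ ≤ a * ‖y'‖ := hy t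
    have h1 : ‖L x‖ ^ 2 ≤ a ^ 2 * ‖x‖ ^ 2 := by nlinarith [norm_nonneg (L x), norm_nonneg x]
    have h2 : ‖L y'‖ ^ 2 ≤ a ^ 2 * ‖y'‖ ^ 2 := by nlinarith [norm_nonneg (L y'), norm_nonneg y']
    have key : ‖L x‖ ^ 2 * ‖L y‖ ^ 2 - ⟪L x, L y⟫ ^ 2
        = ‖L x‖ ^ 2 * ‖L y'‖ ^ 2 - ⟪L x, L y'⟫ ^ 2 := by
      rw [hnLy, hiLy]; ring
    have key2 : ‖x‖ ^ 2 * ‖y‖ ^ 2 - ⟪x, y⟫ ^ 2 = ‖x‖ ^ 2 * ‖y'‖ ^ 2 := by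
      rw [hny, hiy, hxy'0]; ring
    rw [key, key2]
    have hmul : ‖L x‖ ^ 2 * ‖L y'‖ ^ 2 ≤ (a ^ 2 * ‖x‖ ^ 2) * (a ^ 2 * ‖y'‖ ^ 2) :=
      mul_le_mul h1 h2 (sq_nonneg _) (by positivity)
    calc ‖L x‖ ^ 2 * ‖L y'‖ ^ 2 - ⟪L x, L y'⟫ ^ 2 ≤ ‖L x‖ ^ 2 * ‖L y'‖ ^ 2 := by
          nlinarith [sq_nonneg ⟪L x, L y'⟫]
      _ ≤ (a ^ 2 * ‖x‖ ^ 2) * (a ^ 2 * ‖y'‖ ^ 2) := hmul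
      _ = a ^ 4 * (‖x‖ ^ 2 * ‖y'‖ ^ 2) := by ring

set_option maxHeartbeats 800000 in
theorem stmt17 {E : Type*} [NormedAddCommGroup E] [InnerProductSpace ℝ E]
    (L : E →ₗ[ℝ] E) (u : E) (hu : ‖u‖ = 1)
    (σ a : ℝ) (hσ : 1 ≤ σ) (ha : 0 ≤ a) (hσa : σ * a < 1)
    (hLu : L u = σ • u)
    (hperp : ∀ v : E, ⟪u, v⟫ = 0 → ⟪u, L v⟫ = 0 ∧ ‖L v‖ ≤ a * ‖v‖) :
    ∀ v₁ v₂ : E,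
      ‖L v₁‖ ^ 2 * ‖L v₂‖ ^ 2 - ⟪L v₁, L v₂⟫ ^ 2 ≤
        (σ * a) ^ 2 * (‖v₁‖ ^ 2 * ‖v₂‖ ^ 2 - ⟪v₁, v₂⟫ ^ 2) := by
  intro v₁ v₂
  have huu : ⟪u, u⟫ = (1:ℝ) := by rw [real_inner_self_eq_norm_sq, hu]; norm_num
  set c₁ : ℝ := ⟪u, v₁⟫ with hc₁
  set c₂ : ℝ := ⟪u, v₂⟫ with hc₂
  set w₁ : E := v₁ - c₁ • u with hw₁
  set w₂ : E := v₂ - c₂ • u with hw₂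
  have hw₁u : ⟪u, w₁⟫ = 0 := by
    rw [hw₁, inner_sub_right, real_inner_smul_right, huu]; ring
  have hw₂u : ⟪u, w₂⟫ = 0 := by
    rw [hw₂, inner_sub_right, real_inner_smul_right, huu]; ring
  -- perpendicularity is preserved under linear combinations
  have hcomb : ∀ (s t : ℝ), ⟪u, s • w₁ + t • w₂⟫ = 0 := by
    intro s t
    rw [inner_add_right, real_inner_smul_right, real_inner_smul_right, hw₁u, hw₂u]; ring
  have hLw₁ := hperp w₁ hw₁u
  have hLw₂ := hperp w₂ hw₂u
  have hv₁ : v₁ = c₁ • u + w₁ := by rw [hw₁]; abel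
  have hv₂ : v₂ = c₂ • u + w₂ := by rw [hw₂]; abel
  have hLv₁ : L v₁ = (σ * c₁) • u + L w₁ := by
    rw [hv₁]; simp [hLu, smul_smul]; rw [mul_comm]
  have hLv₂ : L v₂ = (σ * c₂) • u + L w₂ := by
    rw [hv₂]; simp [hLu, smul_smul]; rw [mul_comm]
  -- norm and inner expansions
  have expand : ∀ (b₁ b₂ : ℝ) (z₁ z₂ : E), ⟪u, z₁⟫ = 0 → ⟪u, z₂⟫ = 0 →
      ⟪b₁ • u + z₁, b₂ • u + z₂⟫ = b₁ * b₂ + ⟪z₁, z₂⟫ := by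
    intro b₁ b₂ z₁ z₂ h1 h2
    have h1' : ⟪z₁, u⟫ = 0 := by rw [real_inner_comm]; exact h1
    rw [inner_add_left, inner_add_right, inner_add_right, real_inner_smul_left,
      real_inner_smul_left, real_inner_smul_right, real_inner_smul_right, huu, h2, h1']
    ring
  have nsq : ∀ (b : ℝ) (z : E), ⟪u, z⟫ = 0 → ‖b • u + z‖ ^ 2 = b ^ 2 + ‖z‖ ^ 2 := by
    intro b z h
    rw [← real_inner_self_eq_norm_sq, expand b b z z h h, real_inner_self_eq_norm_sq]
    ring
  have e1 : ‖L v₁‖ ^ 2 = (σ * c₁) ^ 2 + ‖L w₁‖ ^ 2 := by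
    rw [hLv₁, nsq _ _ hLw₁.1]
  have e2 : ‖L v₂‖ ^ 2 = (σ * c₂) ^ 2 + ‖L w₂‖ ^ 2 := by
    rw [hLv₂, nsq _ _ hLw₂.1]
  have e3 : ⟪L v₁, L v₂⟫ = (σ * c₁) * (σ * c₂) + ⟪L w₁, L w₂⟫ := by
    rw [hLv₁, hLv₂, expand _ _ _ _ hLw₁.1 hLw₂.1]
  have e4 : ‖v₁‖ ^ 2 = c₁ ^ 2 + ‖w₁‖ ^ 2 := by rw [hv₁] at hc₁ ⊢; rw [nsq _ _ hw₁u]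
  have e5 : ‖v₂‖ ^ 2 = c₂ ^ 2 + ‖w₂‖ ^ 2 := by rw [hv₂] at hc₂ ⊢; rw [nsq _ _ hw₂u]
  have e6 : ⟪v₁, v₂⟫ = c₁ * c₂ + ⟪w₁, w₂⟫ := by
    rw [hv₁, hv₂, expand _ _ _ _ hw₁u hw₂u]
  -- cross term: ‖L (c₁ • w₂ - c₂ • w₁)‖ ≤ a ‖c₁ • w₂ - c₂ • w₁‖
  have hcross : ‖L (c₁ • w₂ - c₂ • w₁)‖ ≤ a * ‖c₁ • w₂ - c₂ • w₁‖ := by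
    refine (hperp _ ?_).2
    have := hcomb (-c₂) c₁
    rw [show (-c₂) • w₁ + c₁ • w₂ = c₁ • w₂ - c₂ • w₁ by module] at this
    exact this
  have hcross2 : ‖L (c₁ • w₂ - c₂ • w₁)‖ ^ 2 ≤ a ^ 2 * ‖c₁ • w₂ - c₂ • w₁‖ ^ 2 := by
    nlinarith [norm_nonneg (L (c₁ • w₂ - c₂ • w₁)), norm_nonneg (c₁ • w₂ - c₂ • w₁)]
  have hLcross : L (c₁ • w₂ - c₂ • w₁) = c₁ • L w₂ - c₂ • L w₁ := by simp
  have sub_sq : ∀ (b₁ b₂ : ℝ) (z₁ z₂ : E), ‖b₁ • z₂ - b₂ • z₁‖ ^ 2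
      = b₁ ^ 2 * ‖z₂‖ ^ 2 - 2 * (b₁ * b₂) * ⟪z₁, z₂⟫ + b₂ ^ 2 * ‖z₁‖ ^ 2 := by
    intro b₁ b₂ z₁ z₂
    rw [@norm_sub_sq_real, real_inner_smul_left, real_inner_smul_right,
      norm_smul_sq_real, norm_smul_sq_real, real_inner_comm z₂ z₁]
    ring
  have hS : c₁ ^ 2 * ‖L w₂‖ ^ 2 - 2 * (c₁ * c₂) * ⟪L w₁, L w₂⟫ + c₂ ^ 2 * ‖L w₁‖ ^ 2
      ≤ a ^ 2 * (c₁ ^ 2 * ‖w₂‖ ^ 2 - 2 * (c₁ * c₂) * ⟪w₁, w₂⟫ + c₂ ^ 2 * ‖w₁‖ ^ 2) := by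
    rw [← sub_sq, ← sub_sq, ← hLcross]
    exact hcross2
  -- Gram contraction on the orthogonal parts
  have hG : ‖L w₁‖ ^ 2 * ‖L w₂‖ ^ 2 - ⟪L w₁, L w₂⟫ ^ 2 ≤
      a ^ 4 * (‖w₁‖ ^ 2 * ‖w₂‖ ^ 2 - ⟪w₁, w₂⟫ ^ 2) := by
    refine gram_contract L a ha w₁ w₂ hLw₁.2 ?_
    intro t
    refine (hperp _ ?_).2
    have := hcomb (-t) 1
    rw [show (-t) • w₁ + (1:ℝ) • w₂ = w₂ - t • w₁ by module] at this
    exact this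
  -- Gram determinant of the orthogonal parts is nonnegative (Cauchy–Schwarz)
  have hGw : (0:ℝ) ≤ ‖w₁‖ ^ 2 * ‖w₂‖ ^ 2 - ⟪w₁, w₂⟫ ^ 2 := by
    have := abs_real_inner_le_norm w₁ w₂
    nlinarith [abs_nonneg ⟪w₁, w₂⟫, sq_abs ⟪w₁, w₂⟫, norm_nonneg w₁, norm_nonneg w₂]
  have ha1 : a < 1 := lt_of_le_of_lt (le_mul_of_one_le_left ha hσ) hσa
  have hσ2 : (1:ℝ) ≤ σ ^ 2 := by nlinarith
  rw [e1, e2, e3, e4, e5, e6]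
  have hσ0 : (0:ℝ) < σ := lt_of_lt_of_le one_pos hσ
  -- a^4 ≤ σ^2 * a^2
  have haa : a ^ 2 ≤ σ ^ 2 := by nlinarith
  have ha4 : a ^ 4 ≤ σ ^ 2 * a ^ 2 := by
    calc a ^ 4 = a ^ 2 * a ^ 2 := by ring
      _ ≤ σ ^ 2 * a ^ 2 := mul_le_mul_of_nonneg_right haa (sq_nonneg a)
  have H1 := mul_le_mul_of_nonneg_left hS (le_of_lt (by positivity : (0:ℝ) < σ ^ 2))
  have H2 := mul_le_mul_of_nonneg_left hGw (sub_nonneg.mpr ha4)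
  linarith [H1, H2, hG]
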